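/- Let R be an expanding edge replacement system and Gl_R its gluing automaton. If a finite word (x₀,y₀)(x₁,y₁)…(x_k,y_k) is recognized by Gl_R and the transition processing the last letter (x_k,y_k) is a Type 2 transition, then x₀…x_k and y₀…y_k are adjacent edges of the full expansion E_k, and the last state of the run, q₁(c(x_k),α;c(y_k),β), records their adjacency type in E_k in the sense of the Type 1 rule. -/
import Mathlib


/-!
Formalization of edge replacement systems, their limit-space gluing relation,
and the gluing automaton, following Belk–Forrest and the paper
"Rationality of the gluing of edge replacement systems".
-/

namespace ERSPaper

/-- The five adjacency-type symbols `in`, `out`, `lp`, `db⁺`, `db⁻`. -/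
inductive EType : Type
  | inn : EType
  | out : EType
  | lp : EType
  | dbp : EType
  | dbm : EType
  deriving DecidableEq

/-- An edge replacement system satisfying the loop-color assumption.
`V z` / `E z` are the vertices/edges of the base graph (`z = none`) or of the
replacement graph `Γ c` (`z = some c`).  For loop colors the two boundary
vertices coincide (the single boundary vertex `λ_c`); for non-loop colors they
are distinct.  The field `loop_iff` is the loop-color assumption: an edge is a
loop if and only if its color is a loop color. -/
structure ERS : Type 1 where
  Col : Type
  [colFintype : Fintype Col]
  [colDecEq : DecidableEq Col]
  V : Option Col → Type
  E : Option Col → Type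
  [vFintype : ∀ z, Fintype (V z)]
  [eFintype : ∀ z, Fintype (E z)]
  [vDecEq : ∀ z, DecidableEq (V z)]
  ini : ∀ z, E z → V z
  fin : ∀ z, E z → V z
  col : ∀ z, E z → Col
  loopCol : Col → Prop
  bIni : ∀ c : Col, V (some c)
  bFin : ∀ c : Col, V (some c)
  bd_eq_iff : ∀ c : Col, (bIni c = bFin c ↔ loopCol c)
  loop_iff : ∀ z (e : E z), (ini z e = fin z e ↔ loopCol (col z e))

attribute [instance] ERS.colFintype ERS.colDecEq ERS.vFintype ERS.eFintype ERS.vDecEq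

namespace ERS

/-- The alphabet `Σ`: the disjoint union of the edge sets of the base graph and
of all the replacement graphs. -/
def Alph (R : ERS) : Type := Σ z : Option R.Col, R.E z

/-- Membership in the symbol space `Ω_R`: infinite directed walks on the color
graph starting at `q(0)`, i.e. `x₀` is an edge of the base graph and `x_{l+1}`
is an edge of `Γ_{c(x_l)}`. -/
def IsWalk (R : ERS) (x : ℕ → R.Alph) : Prop :=
  (x 0).1 = none ∧ ∀ l : ℕ, (x (l + 1)).1 = some (R.col (x l).1 (x l).2)

/-- The finite word `x₀ … x_m` belongs to `E_R`. -/
def IsWalkUpTo (R : ERS) (x : ℕ → R.Alph) (m : ℕ) : Prop :=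
  (x 0).1 = none ∧ ∀ l : ℕ, l < m → (x (l + 1)).1 = some (R.col (x l).1 (x l).2)

theorem IsWalk.upTo {R : ERS} {x : ℕ → R.Alph} (hx : R.IsWalk x) (m : ℕ) :
    R.IsWalkUpTo x m :=
  ⟨hx.1, fun l _ => hx.2 l⟩

end ERS

/-- A finite graph whose edges are colored by the colors of `R`. -/
structure GraphData (R : ERS) : Type 1 where
  V : Type
  E : Type
  ι : E → V
  τ : E → V
  col : E → R.Col

/-- An edge is incident on a vertex. -/
def GraphData.IncidentOn {R : ERS} (G : GraphData R) (e : G.E) (v : G.V) : Prop :=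
  G.ι e = v ∨ G.τ e = v

/-- Two edges are incident on a common vertex. -/
def GraphData.Adjacent {R : ERS} (G : GraphData R) (e f : G.E) : Prop :=
  ∃ v : G.V, G.IncidentOn e v ∧ G.IncidentOn f v

namespace ERS

/-- When expanding the edge `e`, a vertex `v` of the replacement graph
`Γ_{c(e)}` is attached: boundary vertices go to the endpoints of `e`,
interior vertices give fresh vertices. -/
def attach (R : ERS) (G : GraphData R) (e : G.E) (v : R.V (some (G.col e))) :
    G.V ⊕ (Σ e : G.E,
      {v : R.V (some (G.col e)) // v ≠ R.bIni (G.col e) ∧ v ≠ R.bFin (G.col e)}) :=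
  if h1 : v = R.bIni (G.col e) then Sum.inl (G.ι e)
  else if h2 : v = R.bFin (G.col e) then Sum.inl (G.τ e)
  else Sum.inr ⟨e, v, h1, h2⟩

/-- The simultaneous expansion of every edge of `G`. -/
def expandG (R : ERS) (G : GraphData R) : GraphData R where
  V := G.V ⊕ (Σ e : G.E,
    {v : R.V (some (G.col e)) // v ≠ R.bIni (G.col e) ∧ v ≠ R.bFin (G.col e)})
  E := Σ e : G.E, R.E (some (G.col e))
  ι := fun p => R.attach G p.1 (R.ini (some (G.col p.1)) p.2)
  τ := fun p => R.attach G p.1 (R.fin (some (G.col p.1)) p.2)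
  col := fun p => R.col (some (G.col p.1)) p.2

/-- The base graph, as graph data. -/
def base (R : ERS) : GraphData R :=
  ⟨R.V none, R.E none, R.ini none, R.fin none, R.col none⟩

/-- The full expansion sequence `E_m`. -/
def fullExp (R : ERS) : ℕ → GraphData R
  | 0 => R.base
  | m + 1 => R.expandG (R.fullExp m)

theorem col_cast (R : ERS) (p : R.Alph) (z : Option R.Col) (h : p.1 = z) :
    R.col z (cast (congrArg R.E h) p.2) = R.col p.1 p.2 := by
  rcases p with ⟨w, e⟩
  cases h
  rfl

/-- The edge of the full expansion `E_m` labeled by the word `x₀ … x_m`,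
together with the fact that its color is the color of its last letter. -/
def wordEdge (R : ERS) (x : ℕ → R.Alph) :
    (m : ℕ) → R.IsWalkUpTo x m →
      {e : (R.fullExp m).E // (R.fullExp m).col e = R.col (x m).1 (x m).2}
  | 0, hx => ⟨cast (congrArg R.E hx.1) (x 0).2, R.col_cast (x 0) none hx.1⟩
  | m + 1, hx =>
    let prev := R.wordEdge x m ⟨hx.1, fun l hl => hx.2 l (Nat.lt_succ_of_lt hl)⟩
    let h : (x (m + 1)).1 = some ((R.fullExp m).col prev.1) :=
      (hx.2 m (Nat.lt_succ_self m)).trans (congrArg some prev.2.symm)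
    ⟨⟨prev.1, cast (congrArg R.E h) (x (m + 1)).2⟩, R.col_cast (x (m + 1)) _ h⟩

/-- The gluing relation: two elements of `Ω_R` are glued when, for every large
enough `n`, their length-`(n+1)` prefixes are incident on a common vertex of
the full expansion `E_n`. -/
def Glued (R : ERS) (x y : ℕ → R.Alph) (hx : R.IsWalk x) (hy : R.IsWalk y) : Prop :=
  ∃ N : ℕ, ∀ n : ℕ, N ≤ n →
    (R.fullExp n).Adjacent (R.wordEdge x n (hx.upTo n)).1 (R.wordEdge y n (hy.upTo n)).1

/-- The expanding condition on a replacement system (formulated after the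
identification of the boundary vertices for loop colors). -/
structure Expanding (R : ERS) : Prop where
  no_isolated : ∀ z (v : R.V z), ∃ e : R.E z, R.ini z e = v ∨ R.fin z e = v
  no_bd_edge : ∀ c : R.Col, ¬ R.loopCol c → ∀ e : R.E (some c),
    ¬ ((R.ini (some c) e = R.bIni c ∧ R.fin (some c) e = R.bFin c) ∨
       (R.ini (some c) e = R.bFin c ∧ R.fin (some c) e = R.bIni c))
  two_edges : ∀ c : R.Col, 2 ≤ Fintype.card (R.E (some c))
  interior : ∀ c : R.Col, ∃ v : R.V (some c), v ≠ R.bIni c ∧ v ≠ R.bFin c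

end ERS

/-- `EndAt ι τ v α` : the edge with initial vertex `ι` and terminal vertex `τ`
is incident on `v`, in the fashion recorded by `α`: incoming (`in`), outgoing
(`out`) or a loop (`lp`). -/
inductive EndAt {V : Type} : V → V → V → EType → Prop
  | inn {i v : V} : i ≠ v → EndAt i v v .inn
  | out {t v : V} : v ≠ t → EndAt v t v .out
  | lp {v : V} : EndAt v v v .lp

/-- Two non-loop edges (given by their endpoints) are parallel. -/
def Parallel {V : Type} (ia ta ib tb : V) : Prop :=
  ia ≠ ta ∧ ((ia = ib ∧ ta = tb) ∨ (ia = tb ∧ ta = ib))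

/-- The Type 1 adjacency-type rule for two distinct adjacent edges, given by
their endpoints: parallel non-loops give the `db` types (same or opposite
orientation), and otherwise the unique common vertex `v` determines the types
via `EndAt`. -/
inductive AdjType {V : Type} : V → V → V → V → EType → EType → Prop
  | dbSame {u v : V} : u ≠ v → AdjType u v u v .dbp .dbp
  | dbOpp {u v : V} : u ≠ v → AdjType u v v u .dbp .dbm
  | single {ia ta ib tb v : V} {α β : EType} :
      ¬ Parallel ia ta ib tb → EndAt ia ta v α → EndAt ib tb v β →
      AdjType ia ta ib tb α β

/-- The states of the gluing automaton `Gl_R`. -/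
inductive GlState (R : ERS) : Type
  | q0 : Option R.Col → GlState R
  | q1 : R.Col → EType → R.Col → EType → GlState R

/-- Membership in `Q₀`. -/
def GlState.inQ0 {R : ERS} : GlState R → Prop
  | .q0 _ => True
  | _ => False

/-- Membership in `Q₁`. -/
def GlState.inQ1 {R : ERS} : GlState R → Prop
  | .q1 _ _ _ _ => True
  | _ => False

/-- The defining conditions for states of `Q₁`: `γ ≠ db⁻` and
(`δ ∈ {db⁺, db⁻}` iff `γ = db⁺`). -/
def GlState.Valid {R : ERS} : GlState R → Prop
  | .q0 _ => True
  | .q1 _ γ _ δ => γ ≠ .dbm ∧ ((δ = .dbp ∨ δ = .dbm) ↔ γ = .dbp)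

/-- The tracked boundary vertex of `Γ_c` for a non-`db` symbol:
`τ_c` for `in`, `ι_c` for `out`, and `λ_c` (the identified boundary vertex)
for `lp`. -/
def trackedV (R : ERS) (c : R.Col) : EType → Set (R.V (some c))
  | .inn => {R.bFin c}
  | .out => {R.bIni c}
  | .lp => {R.bIni c}
  | _ => ∅

/-- The pairs of tracked vertices of a state `q₁(i,γ;j,δ)`. -/
inductive TrackedPair (R : ERS) (i j : R.Col) :
    EType → EType → R.V (some i) → R.V (some j) → Prop
  | nondb {γ δ : EType} {u : R.V (some i)} {w : R.V (some j)} :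
      u ∈ trackedV R i γ → w ∈ trackedV R j δ → TrackedPair R i j γ δ u w
  | dbppIni : TrackedPair R i j .dbp .dbp (R.bIni i) (R.bIni j)
  | dbppFin : TrackedPair R i j .dbp .dbp (R.bFin i) (R.bFin j)
  | dbpmIni : TrackedPair R i j .dbp .dbm (R.bIni i) (R.bFin j)
  | dbpmFin : TrackedPair R i j .dbp .dbm (R.bFin i) (R.bIni j)

/-- The transitions of the gluing automaton `Gl_R`. -/
inductive GlTrans (R : ERS) : GlState R → R.Alph × R.Alph → GlState R → Prop
  | type0 (z : Option R.Col) (e : R.E z) :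
      GlTrans R (.q0 z) (⟨z, e⟩, ⟨z, e⟩) (.q0 (some (R.col z e)))
  | type1 (z : Option R.Col) (a b : R.E z) (hab : a ≠ b) {α β : EType}
      (h : AdjType (R.ini z a) (R.fin z a) (R.ini z b) (R.fin z b) α β) :
      GlTrans R (.q0 z) (⟨z, a⟩, ⟨z, b⟩) (.q1 (R.col z a) α (R.col z b) β)
  | type2 (i j : R.Col) (γ δ : EType) (a : R.E (some i)) (b : R.E (some j))
      {u : R.V (some i)} {w : R.V (some j)}
      (hp : TrackedPair R i j γ δ u w) {α β : EType}
      (ha : EndAt (R.ini (some i) a) (R.fin (some i) a) u α)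
      (hb : EndAt (R.ini (some j) b) (R.fin (some j) b) w β) :
      GlTrans R (.q1 i γ j δ) (⟨some i, a⟩, ⟨some j, b⟩)
        (.q1 (R.col (some i) a) α (R.col (some j) b) β)

/-- Infinite runs of `Gl_R` from the initial state `q₀(0)`. -/
def GlRun (R : ERS) (w : ℕ → R.Alph × R.Alph) (q : ℕ → GlState R) : Prop :=
  q 0 = .q0 none ∧ ∀ l : ℕ, GlTrans R (q l) (w l) (q (l + 1))

/-- `Gl_R` recognizes the infinite sequence `w`. -/
def GlAccepts (R : ERS) (w : ℕ → R.Alph × R.Alph) : Prop :=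
  ∃ q : ℕ → GlState R, GlRun R w q

/-- Finite runs of `Gl_R` processing the letters `w 0, …, w m`. -/
def GlRunFin (R : ERS) (w : ℕ → R.Alph × R.Alph) (m : ℕ) (q : ℕ → GlState R) : Prop :=
  q 0 = .q0 none ∧ ∀ l : ℕ, l ≤ m → GlTrans R (q l) (w l) (q (l + 1))

/-- `Gl_R` recognizes the finite word `w 0, …, w m`. -/
def GlAcceptsFin (R : ERS) (w : ℕ → R.Alph × R.Alph) (m : ℕ) : Prop :=
  ∃ q : ℕ → GlState R, GlRunFin R w m q

/-- The transitions of the full sub-automaton `T_R` induced by `Q₀`. -/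
def TTrans (R : ERS) (s : GlState R) (p : R.Alph × R.Alph) (t : GlState R) : Prop :=
  GlTrans R s p t ∧ s.inQ0 ∧ t.inQ0

/-- Finite runs of `T_R` processing the letters `w 0, …, w m`. -/
def TRunFin (R : ERS) (w : ℕ → R.Alph × R.Alph) (m : ℕ) (q : ℕ → GlState R) : Prop :=
  q 0 = .q0 none ∧ ∀ l : ℕ, l ≤ m → TTrans R (q l) (w l) (q (l + 1))

/-- `T_R` recognizes the finite word `w 0, …, w m`. -/
def TAcceptsFin (R : ERS) (w : ℕ → R.Alph × R.Alph) (m : ℕ) : Prop :=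
  ∃ q : ℕ → GlState R, TRunFin R w m q

end ERSPaper

namespace ERSPaper

/-! ### Auxiliary lemmas -/

variable {R : ERS}

/-- The color index of the graph from which the `m`-th letter of a walk must
be drawn. -/
def colAt (R : ERS) (x : ℕ → R.Alph) : ℕ → Option R.Col
  | 0 => none
  | m + 1 => some (R.col (x m).1 (x m).2)

lemma isWalkUpTo_of_colAt {x : ℕ → R.Alph} {k : ℕ}
    (h : ∀ l, l ≤ k → (x l).1 = colAt R x l) : R.IsWalkUpTo x k :=
  ⟨h 0 (Nat.zero_le _), fun l hl => h (l + 1) hl⟩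

/-- A graph satisfying the loop-color assumption. -/
def GoodG (R : ERS) (G : GraphData R) : Prop :=
  ∀ e : G.E, (G.ι e = G.τ e ↔ R.loopCol (G.col e))

lemma attach_of_bIni {G : GraphData R} (e : G.E) {v : R.V (some (G.col e))}
    (h : v = R.bIni (G.col e)) : R.attach G e v = Sum.inl (G.ι e) := by
  unfold ERS.attach; rw [dif_pos h]

lemma attach_of_bFin {G : GraphData R} (hG : GoodG R G) (e : G.E)
    {v : R.V (some (G.col e))} (h : v = R.bFin (G.col e)) :
    R.attach G e v = Sum.inl (G.τ e) := by
  unfold ERS.attach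
  by_cases h1 : v = R.bIni (G.col e)
  · rw [dif_pos h1]
    have hL : R.loopCol (G.col e) := (R.bd_eq_iff _).mp (h1.symm.trans h)
    rw [(hG e).mpr hL]
  · rw [dif_neg h1, dif_pos h]

lemma attach_of_int {G : GraphData R} (e : G.E) {v : R.V (some (G.col e))}
    (h1 : v ≠ R.bIni (G.col e)) (h2 : v ≠ R.bFin (G.col e)) :
    R.attach G e v = Sum.inr ⟨e, v, h1, h2⟩ := by
  unfold ERS.attach; rw [dif_neg h1, dif_neg h2]

lemma attach_inj {G : GraphData R} (hG : GoodG R G) (e : G.E) :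
    Function.Injective (R.attach G e) := by
  intro v v' h
  by_cases h1 : v = R.bIni (G.col e) <;> by_cases h2 : v = R.bFin (G.col e) <;>
    by_cases h3 : v' = R.bIni (G.col e) <;> by_cases h4 : v' = R.bFin (G.col e)
  all_goals first
  | exact h1.trans h3.symm
  | exact h2.trans h4.symm
  | (rw [attach_of_bIni e h1, attach_of_int e h3 h4] at h; exact absurd h (by simp))
  | (rw [attach_of_bFin hG e h2, attach_of_int e h3 h4] at h; exact absurd h (by simp))
  | (rw [attach_of_int e h1 h2, attach_of_bIni e h3] at h; exact absurd h (by simp))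
  | (rw [attach_of_int e h1 h2, attach_of_bFin hG e h4] at h; exact absurd h (by simp))
  | (rw [attach_of_bIni e h1, attach_of_bFin hG e h4] at h;
     exact absurd (h1.trans ((R.bd_eq_iff _).mpr ((hG e).mp (Sum.inl.inj h)))) h2)
  | (rw [attach_of_bFin hG e h2, attach_of_bIni e h3] at h;
     exact absurd (h3.trans ((R.bd_eq_iff _).mpr ((hG e).mp (Sum.inl.inj h).symm))) h4)
  | (rw [attach_of_int e h1 h2, attach_of_int e h3 h4] at h;
     injection h with h;
     injection h with h h';
     exact congrArg Subtype.val h')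

lemma goodG_fullExp (R : ERS) : ∀ m : ℕ, GoodG R (R.fullExp m)
  | 0 => fun e => R.loop_iff none e
  | m + 1 => by
    intro e
    obtain ⟨e, f⟩ := e
    show R.attach _ e (R.ini _ f) = R.attach _ e (R.fin _ f) ↔ _
    constructor
    · intro h
      exact (R.loop_iff _ f).mp (attach_inj (goodG_fullExp R m) e h)
    · intro h
      exact congrArg _ ((R.loop_iff _ f).mpr h)

/-! Inversion lemmas. -/

lemma endAt_cases {V : Type} {i t v : V} {α : EType} (h : EndAt i t v α) :
    (α = .inn ∧ t = v ∧ i ≠ v) ∨ (α = .out ∧ i = v ∧ v ≠ t) ∨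
      (α = .lp ∧ i = v ∧ t = v) := by
  cases h with
  | inn h => exact Or.inl ⟨rfl, rfl, h⟩
  | out h => exact Or.inr (Or.inl ⟨rfl, rfl, h⟩)
  | lp => exact Or.inr (Or.inr ⟨rfl, rfl, rfl⟩)

lemma adjType_cases {V : Type} {ia ta ib tb : V} {α β : EType}
    (h : AdjType ia ta ib tb α β) :
    (α = .dbp ∧ β = .dbp ∧ ia ≠ ta ∧ ib = ia ∧ tb = ta) ∨
    (α = .dbp ∧ β = .dbm ∧ ia ≠ ta ∧ ib = ta ∧ tb = ia) ∨
    (¬ Parallel ia ta ib tb ∧ ∃ v, EndAt ia ta v α ∧ EndAt ib tb v β) := by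
  cases h with
  | dbSame h => exact Or.inl ⟨rfl, rfl, h, rfl, rfl⟩
  | dbOpp h => exact Or.inr (Or.inl ⟨rfl, rfl, h, rfl, rfl⟩)
  | single hnp ha hb => exact Or.inr (Or.inr ⟨hnp, _, ha, hb⟩)

lemma EndAt.map {V W : Type} {f : V → W} (hf : Function.Injective f)
    {i t v : V} {α : EType} (h : EndAt i t v α) : EndAt (f i) (f t) (f v) α := by
  cases h with
  | inn h => exact .inn fun e => h (hf e)
  | out h => exact .out fun e => h (hf e)
  | lp => exact .lp

lemma parallel_of_map {V W : Type} {f : V → W} (hf : Function.Injective f)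
    {ia ta ib tb : V} (h : Parallel (f ia) (f ta) (f ib) (f tb)) :
    Parallel ia ta ib tb := by
  obtain ⟨h1, h2 | h2⟩ := h
  · exact ⟨fun e => h1 (congrArg f e), Or.inl ⟨hf h2.1, hf h2.2⟩⟩
  · exact ⟨fun e => h1 (congrArg f e), Or.inr ⟨hf h2.1, hf h2.2⟩⟩

lemma AdjType.map {V W : Type} {f : V → W} (hf : Function.Injective f)
    {ia ta ib tb : V} {α β : EType} (h : AdjType ia ta ib tb α β) :
    AdjType (f ia) (f ta) (f ib) (f tb) α β := by
  cases h with
  | dbSame h => exact .dbSame fun e => h (hf e)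
  | dbOpp h => exact .dbOpp fun e => h (hf e)
  | single hnp ha hb =>
      exact .single (fun hp => hnp (parallel_of_map hf hp)) (ha.map hf) (hb.map hf)

lemma EndAt.incident {V : Type} {i t v : V} {α : EType} (h : EndAt i t v α) :
    i = v ∨ t = v := by
  rcases endAt_cases h with ⟨_, h1, _⟩ | ⟨_, h1, _⟩ | ⟨_, h1, _⟩
  · exact Or.inr h1
  · exact Or.inl h1
  · exact Or.inl h1

lemma adjacent_of_adjType {G : GraphData R} {e f : G.E} {α β : EType}
    (h : AdjType (G.ι e) (G.τ e) (G.ι f) (G.τ f) α β) : G.Adjacent e f := by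
  rcases adjType_cases h with ⟨_, _, _, h1, h2⟩ | ⟨_, _, _, h1, h2⟩ |
    ⟨_, v, ha, hb⟩
  · exact ⟨G.ι e, Or.inl rfl, Or.inl h1⟩
  · exact ⟨G.τ e, Or.inr rfl, Or.inl h1⟩
  · exact ⟨v, ha.incident, hb.incident⟩


lemma attach_tracked {G : GraphData R} (hG : GoodG R G) (e : G.E) {γ : EType}
    {v : G.V} (he : EndAt (G.ι e) (G.τ e) v γ) {u : R.V (some (G.col e))}
    (hu : u ∈ trackedV R (G.col e) γ) : R.attach G e u = Sum.inl v := by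
  rcases endAt_cases he with ⟨rfl, hv, hne⟩ | ⟨rfl, hv, hne⟩ | ⟨rfl, hv, hv'⟩
  · -- γ = inn : u = bFin, v = τ e
    simp only [trackedV, Set.mem_singleton_iff] at hu
    rw [attach_of_bFin hG e hu, hv]
  · -- γ = out : u = bIni, v = ι e
    simp only [trackedV, Set.mem_singleton_iff] at hu
    rw [attach_of_bIni e hu, hv]
  · -- γ = lp : u = bIni, v = ι e
    simp only [trackedV, Set.mem_singleton_iff] at hu
    rw [attach_of_bIni e hu, hv]

lemma tracked_shared {G : GraphData R} (hG : GoodG R G) {ex ey : G.E} {γ δ : EType}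
    (hadj : AdjType (G.ι ex) (G.τ ex) (G.ι ey) (G.τ ey) γ δ)
    {u : R.V (some (G.col ex))} {w : R.V (some (G.col ey))}
    (hp : TrackedPair R (G.col ex) (G.col ey) γ δ u w) :
    R.attach G ex u = R.attach G ey w := by
  have hnl : ∀ e : G.E, G.ι e ≠ G.τ e → R.bFin (G.col e) = R.bFin (G.col e) →
      True := fun _ _ _ => trivial
  cases hp with
  | nondb hu hw =>
    rcases adjType_cases hadj with ⟨rfl, _, _, _, _⟩ | ⟨_, rfl, _, _, _⟩ |
      ⟨_, v, ha, hb⟩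
    · simp [trackedV] at hu
    · simp [trackedV] at hw
    · rw [attach_tracked hG ex ha hu, attach_tracked hG ey hb hw]
  | dbppIni =>
    rcases adjType_cases hadj with ⟨_, _, hne, h1, h2⟩ | ⟨_, h, _, _, _⟩ |
      ⟨_, v, ha, hb⟩
    · rw [attach_of_bIni ex rfl, attach_of_bIni ey rfl, h1]
    · exact absurd h (by simp)
    · rcases endAt_cases ha with ⟨h, _, _⟩ | ⟨h, _, _⟩ | ⟨h, _, _⟩ <;> simp at h
  | dbppFin =>
    rcases adjType_cases hadj with ⟨_, _, hne, h1, h2⟩ | ⟨_, h, _, _, _⟩ |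
      ⟨_, v, ha, hb⟩
    · rw [attach_of_bFin hG ex rfl, attach_of_bFin hG ey rfl, h2]
    · exact absurd h (by simp)
    · rcases endAt_cases ha with ⟨h, _, _⟩ | ⟨h, _, _⟩ | ⟨h, _, _⟩ <;> simp at h
  | dbpmIni =>
    rcases adjType_cases hadj with ⟨_, h, _, _, _⟩ | ⟨_, _, hne, h1, h2⟩ |
      ⟨_, v, ha, hb⟩
    · exact absurd h (by simp)
    · rw [attach_of_bIni ex rfl, attach_of_bFin hG ey rfl, h2]
    · rcases endAt_cases ha with ⟨h, _, _⟩ | ⟨h, _, _⟩ | ⟨h, _, _⟩ <;> simp at h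
  | dbpmFin =>
    rcases adjType_cases hadj with ⟨_, h, _, _, _⟩ | ⟨_, _, hne, h1, h2⟩ |
      ⟨_, v, ha, hb⟩
    · exact absurd h (by simp)
    · rw [attach_of_bFin hG ex rfl, attach_of_bIni ey rfl, h1]
    · rcases endAt_cases ha with ⟨h, _, _⟩ | ⟨h, _, _⟩ | ⟨h, _, _⟩ <;> simp at h

lemma attach_boundary_of_ne {G : GraphData R} (hG : GoodG R G) {ex ey : G.E} (hne : ex ≠ ey)
    {p : R.V (some (G.col ex))} {q : R.V (some (G.col ey))}
    (h : R.attach G ex p = R.attach G ey q) :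
    (p = R.bIni (G.col ex) ∨ p = R.bFin (G.col ex)) ∧
      (q = R.bIni (G.col ey) ∨ q = R.bFin (G.col ey)) := by
  by_cases h1 : p = R.bIni (G.col ex) <;> by_cases h2 : p = R.bFin (G.col ex) <;>
    by_cases h3 : q = R.bIni (G.col ey) <;> by_cases h4 : q = R.bFin (G.col ey)
  all_goals first
  | exact ⟨Or.inl h1, Or.inl h3⟩
  | exact ⟨Or.inl h1, Or.inr h4⟩
  | exact ⟨Or.inr h2, Or.inl h3⟩
  | exact ⟨Or.inr h2, Or.inr h4⟩
  | (rw [attach_of_int ex h1 h2, attach_of_int ey h3 h4] at h;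
     injection h with h; exact absurd (congrArg Sigma.fst h) hne)
  | (rw [attach_of_bIni ex h1, attach_of_int ey h3 h4] at h; exact absurd h (by simp))
  | (rw [attach_of_bFin hG ex h2, attach_of_int ey h3 h4] at h; exact absurd h (by simp))
  | (rw [attach_of_int ex h1 h2, attach_of_bIni ey h3] at h; exact absurd h (by simp))
  | (rw [attach_of_int ex h1 h2, attach_of_bFin hG ey h4] at h; exact absurd h (by simp))

lemma not_parallel_cross (hR : R.Expanding) {G : GraphData R} (hG : GoodG R G)
    {ex ey : G.E} (hne : ex ≠ ey)
    (a : R.E (some (G.col ex))) (b : R.E (some (G.col ey))) :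
    ¬ Parallel (R.attach G ex (R.ini _ a)) (R.attach G ex (R.fin _ a))
      (R.attach G ey (R.ini _ b)) (R.attach G ey (R.fin _ b)) := by
  rintro ⟨h0, h1 | h1⟩ <;>
  · have hia := (attach_boundary_of_ne hG hne h1.1).1
    have hfa := (attach_boundary_of_ne hG hne h1.2).1
    have hne' : R.ini _ a ≠ R.fin _ a := fun hh => h0 (congrArg _ hh)
    by_cases hL : R.loopCol (G.col ex)
    · have hb := (R.bd_eq_iff _).mpr hL
      rcases hia with h | h <;> rcases hfa with h' | h' <;>
        exact hne' (by simp only [h, h', hb])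
    · refine hR.no_bd_edge _ hL a ?_
      rcases hia with h | h <;> rcases hfa with h' | h'
      · exact absurd (h.trans h'.symm) hne'
      · exact Or.inl ⟨h, h'⟩
      · exact Or.inr ⟨h, h'⟩
      · exact absurd (h.trans h'.symm) hne'

/-- The key step for Type 2 transitions: the new labeled edges have the
adjacency type recorded by the transition. -/
lemma step2 (hR : R.Expanding) {G : GraphData R} (hG : GoodG R G)
    {ex ey : G.E} (hne : ex ≠ ey) {i j : R.Col}
    (hi : some i = some (G.col ex)) (hj : some j = some (G.col ey))
    {γ δ α β : EType} {u : R.V (some i)} {w : R.V (some j)}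
    (hadj : AdjType (G.ι ex) (G.τ ex) (G.ι ey) (G.τ ey) γ δ)
    (hp : TrackedPair R i j γ δ u w)
    {a : R.E (some i)} {b : R.E (some j)}
    (ha : EndAt (R.ini (some i) a) (R.fin (some i) a) u α)
    (hb : EndAt (R.ini (some j) b) (R.fin (some j) b) w β) :
    AdjType ((R.expandG G).ι ⟨ex, cast (congrArg R.E hi) a⟩)
            ((R.expandG G).τ ⟨ex, cast (congrArg R.E hi) a⟩)
            ((R.expandG G).ι ⟨ey, cast (congrArg R.E hj) b⟩)
            ((R.expandG G).τ ⟨ey, cast (congrArg R.E hj) b⟩) α β := by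
  have hi' : i = G.col ex := Option.some.inj hi
  subst hi'
  have hj' : j = G.col ey := Option.some.inj hj
  subst hj'
  show AdjType (R.attach G ex (R.ini _ a)) (R.attach G ex (R.fin _ a))
      (R.attach G ey (R.ini _ b)) (R.attach G ey (R.fin _ b)) α β
  have hfu := tracked_shared hG hadj hp
  have ha' := ha.map (attach_inj hG ex)
  have hb' := hb.map (attach_inj hG ey)
  rw [hfu] at ha'
  exact AdjType.single (not_parallel_cross hR hG hne a b) ha' hb'

/-- The key step for Type 1 transitions at positive levels. -/
lemma step1 {G : GraphData R} (hG : GoodG R G) (e : G.E) {z : Option R.Col}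
    (hz : z = some (G.col e)) {a b : R.E z} {α β : EType}
    (hadj : AdjType (R.ini z a) (R.fin z a) (R.ini z b) (R.fin z b) α β) :
    AdjType ((R.expandG G).ι ⟨e, cast (congrArg R.E hz) a⟩)
            ((R.expandG G).τ ⟨e, cast (congrArg R.E hz) a⟩)
            ((R.expandG G).ι ⟨e, cast (congrArg R.E hz) b⟩)
            ((R.expandG G).τ ⟨e, cast (congrArg R.E hz) b⟩) α β := by
  subst hz
  exact hadj.map (attach_inj hG e)



lemma cast_snd_eq {p : R.Alph} {z z' : Option R.Col} {a : R.E z} (hp : p = ⟨z, a⟩)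
    (h : p.1 = z') (h2 : z = z') :
    cast (congrArg R.E h) p.2 = cast (congrArg R.E h2) a := by
  subst hp; subst h2; rfl

lemma wordEdge_succ_def (x : ℕ → R.Alph) (m : ℕ) (hx : R.IsWalkUpTo x (m + 1)) :
    (R.wordEdge x (m + 1) hx).1 =
      ⟨(R.wordEdge x m ⟨hx.1, fun l hl => hx.2 l (Nat.lt_succ_of_lt hl)⟩).1,
        cast (congrArg R.E ((hx.2 m (Nat.lt_succ_self m)).trans (congrArg some
          (R.wordEdge x m ⟨hx.1, fun l hl => hx.2 l (Nat.lt_succ_of_lt hl)⟩).2.symm)))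
          (x (m + 1)).2⟩ := rfl

lemma wordEdge_proof_irrel (x : ℕ → R.Alph) (m : ℕ) (h1 h2 : R.IsWalkUpTo x m) :
    (R.wordEdge x m h1).1 = (R.wordEdge x m h2).1 := rfl

lemma wordEdge_succ_eq {x : ℕ → R.Alph} {m : ℕ} (hx : R.IsWalkUpTo x (m + 1))
    {z : Option R.Col} {a : R.E z} (hxm : x (m + 1) = ⟨z, a⟩)
    {e : (R.fullExp m).E}
    (he : (R.wordEdge x m ⟨hx.1, fun l hl => hx.2 l (Nat.lt_succ_of_lt hl)⟩).1 = e)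
    (hz : z = some ((R.fullExp m).col e)) :
    (R.wordEdge x (m + 1) hx).1 = ⟨e, cast (congrArg R.E hz) a⟩ := by
  subst he
  rw [wordEdge_succ_def]
  exact congrArg _ (cast_snd_eq hxm
    ((hx.2 m (Nat.lt_succ_self m)).trans (congrArg some
      (R.wordEdge x m ⟨hx.1, fun l hl => hx.2 l (Nat.lt_succ_of_lt hl)⟩).2.symm)) hz)

lemma wordEdge_congr {x y : ℕ → R.Alph} : ∀ {m : ℕ}, (∀ l, l ≤ m → x l = y l) →
    ∀ (hx : R.IsWalkUpTo x m) (hy : R.IsWalkUpTo y m),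
    (R.wordEdge x m hx).1 = (R.wordEdge y m hy).1
  | 0, h, hx, hy => by
    apply eq_of_heq
    refine (cast_heq _ _).trans (HEq.trans ?_ (cast_heq _ _).symm)
    rw [h 0 le_rfl]
  | m + 1, h, hx, hy => by
    have ih := wordEdge_congr (fun l hl => h l (le_trans hl (Nat.le_succ m)))
      ⟨hx.1, fun l hl => hx.2 l (Nat.lt_succ_of_lt hl)⟩
      ⟨hy.1, fun l hl => hy.2 l (Nat.lt_succ_of_lt hl)⟩
    have hz : (x (m + 1)).1 = some ((R.fullExp m).col
        (R.wordEdge x m ⟨hx.1, fun l hl => hx.2 l (Nat.lt_succ_of_lt hl)⟩).1) :=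
      (hx.2 m (Nat.lt_succ_self m)).trans (congrArg some
        (R.wordEdge x m ⟨hx.1, fun l hl => hx.2 l (Nat.lt_succ_of_lt hl)⟩).2.symm)
    have hzy : (y (m + 1)).1 = some ((R.fullExp m).col
        (R.wordEdge x m ⟨hx.1, fun l hl => hx.2 l (Nat.lt_succ_of_lt hl)⟩).1) := by
      rw [← h (m + 1) le_rfl]; exact hz
    rw [wordEdge_succ_eq hx rfl rfl hz, wordEdge_succ_eq hy rfl ih.symm hzy]
    exact congrArg _ (cast_snd_eq (h (m + 1) le_rfl) hz hzy)



lemma glTrans_inv {s t : GlState R} {p : R.Alph × R.Alph} (h : GlTrans R s p t) :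
    (∃ z e, s = .q0 z ∧ p = (⟨z, e⟩, ⟨z, e⟩) ∧ t = .q0 (some (R.col z e))) ∨
    (∃ z a b, a ≠ b ∧ ∃ α β, s = .q0 z ∧ p = (⟨z, a⟩, ⟨z, b⟩) ∧
      t = .q1 (R.col z a) α (R.col z b) β ∧
      AdjType (R.ini z a) (R.fin z a) (R.ini z b) (R.fin z b) α β) ∨
    (∃ i j γ δ, ∃ (a : R.E (some i)) (b : R.E (some j)) (u : R.V (some i))
        (w' : R.V (some j)) (α β : EType), s = .q1 i γ j δ ∧
      p = (⟨some i, a⟩, ⟨some j, b⟩) ∧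
      t = .q1 (R.col (some i) a) α (R.col (some j) b) β ∧
      TrackedPair R i j γ δ u w' ∧
      EndAt (R.ini (some i) a) (R.fin (some i) a) u α ∧
      EndAt (R.ini (some j) b) (R.fin (some j) b) w' β) := by
  cases h with
  | type0 z e => exact Or.inl ⟨z, e, rfl, rfl, rfl⟩
  | type1 z a b hab h =>
      exact Or.inr (Or.inl ⟨z, a, b, hab, _, _, rfl, rfl, rfl, h⟩)
  | type2 i j γ δ a b hp ha hb =>
      exact Or.inr (Or.inr ⟨i, j, γ, δ, a, b, _, _, _, _, rfl, rfl, rfl, hp, ha, hb⟩)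

lemma run_q0 {w : ℕ → R.Alph × R.Alph} {q : ℕ → GlState R}
    (h0 : q 0 = .q0 none) :
    ∀ m : ℕ, (∀ l, l < m → GlTrans R (q l) (w l) (q (l + 1))) → (q m).inQ0 →
    (∀ l, l < m → (w l).1 = (w l).2) ∧
    (∀ l, l < m → ((w l).1).1 = colAt R (fun n => (w n).1) l) ∧
    q m = .q0 (colAt R (fun n => (w n).1) m)
  | 0, _, _ => ⟨fun l hl => absurd hl (Nat.not_lt_zero l),
      fun l hl => absurd hl (Nat.not_lt_zero l), h0⟩
  | m + 1, htr, hq => by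
    rcases glTrans_inv (htr m (Nat.lt_succ_self m)) with
      ⟨z, e, hs, hp, ht⟩ | ⟨z, a, b, hab, α, β, hs, hp, ht, _⟩ |
      ⟨i, j, γ, δ, a, b, u, w', α, β, hs, hp, ht, _, _, _⟩
    · obtain ⟨D, C, E⟩ := run_q0 h0 m (fun l hl => htr l (Nat.lt_trans hl (Nat.lt_succ_self m)))
        (by rw [hs]; trivial)
      have hz : z = colAt R (fun n => (w n).1) m := by
        have := hs.symm.trans E
        exact (GlState.q0.injEq _ _).mp this
      refine ⟨?_, ?_, ?_⟩
      · intro l hl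
        rcases Nat.lt_succ_iff_lt_or_eq.mp hl with hl | rfl
        · exact D l hl
        · rw [hp]
      · intro l hl
        rcases Nat.lt_succ_iff_lt_or_eq.mp hl with hl | rfl
        · exact C l hl
        · rw [hp, ← hz]
      · rw [ht]
        show _ = GlState.q0 (some (R.col ((w m).1).1 ((w m).1).2))
        rw [hp]
    · rw [ht] at hq
      exact absurd hq (by simp [GlState.inQ0])
    · rw [ht] at hq
      exact absurd hq (by simp [GlState.inQ0])


theorem master (R : ERS) (hR : R.Expanding) (w : ℕ → R.Alph × R.Alph) (k : ℕ) :
    ∀ q : ℕ → GlState R, GlRunFin R w k q → (q (k + 1)).inQ1 →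
    ∃ (hx : R.IsWalkUpTo (fun n => (w n).1) k)
      (hy : R.IsWalkUpTo (fun n => (w n).2) k),
      (R.wordEdge (fun n => (w n).1) k hx).1 ≠
        (R.wordEdge (fun n => (w n).2) k hy).1 ∧
      ∃ α β : EType,
        q (k + 1) =
          .q1 (R.col ((w k).1).1 ((w k).1).2) α
              (R.col ((w k).2).1 ((w k).2).2) β ∧
        AdjType ((R.fullExp k).ι (R.wordEdge (fun n => (w n).1) k hx).1)
                ((R.fullExp k).τ (R.wordEdge (fun n => (w n).1) k hx).1)
                ((R.fullExp k).ι (R.wordEdge (fun n => (w n).2) k hy).1)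
                ((R.fullExp k).τ (R.wordEdge (fun n => (w n).2) k hy).1) α β := by
  induction k with
  | zero =>
    intro q hrun hq1
    rcases glTrans_inv (hrun.2 0 le_rfl) with ⟨z, e, hs, hp, ht⟩ |
      ⟨z, a, b, hab, α, β, hs, hp, ht, hadj⟩ |
      ⟨i, j, γ, δ, a, b, u, w', α, β, hs, hp, ht, _, _, _⟩
    · rw [ht] at hq1; exact absurd hq1 (by simp [GlState.inQ1])
    · have hz : z = none := (GlState.q0.injEq _ _).mp (hs.symm.trans hrun.1)
      subst hz
      have hxk : (w 0).1 = ⟨none, a⟩ := by rw [hp]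
      have hyk : (w 0).2 = ⟨none, b⟩ := by rw [hp]
      have hx : R.IsWalkUpTo (fun n => (w n).1) 0 :=
        ⟨show ((w 0).1).1 = none by rw [hxk], fun l hl => absurd hl (Nat.not_lt_zero l)⟩
      have hy : R.IsWalkUpTo (fun n => (w n).2) 0 :=
        ⟨show ((w 0).2).1 = none by rw [hyk], fun l hl => absurd hl (Nat.not_lt_zero l)⟩
      have hxe : (R.wordEdge (fun n => (w n).1) 0 hx).1 = a := by
        show cast (congrArg R.E hx.1) ((w 0).1).2 = a
        rw [cast_snd_eq hxk hx.1 rfl]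
        exact cast_eq _ a
      have hye : (R.wordEdge (fun n => (w n).2) 0 hy).1 = b := by
        show cast (congrArg R.E hy.1) ((w 0).2).2 = b
        rw [cast_snd_eq hyk hy.1 rfl]
        exact cast_eq _ b
      refine ⟨hx, hy, ?_, α, β, ?_, ?_⟩
      · rw [hxe, hye]; exact hab
      · rw [ht, hxk, hyk]
      · rw [hxe, hye]; exact hadj
    · exact absurd (hrun.1.symm.trans hs) (by simp)
  | succ k IH =>
    intro q hrun hq1
    rcases glTrans_inv (hrun.2 (k + 1) le_rfl) with ⟨z, e, hs, hp, ht⟩ |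
      ⟨z, a, b, hab, α, β, hs, hp, ht, hadj⟩ |
      ⟨i, j, γ, δ, a, b, u, w', α, β, hs, hpw, ht, htp, hea, heb⟩
    · rw [ht] at hq1; exact absurd hq1 (by simp [GlState.inQ1])
    · -- Type 1 transition at step k+1 : all previous steps are Type 0.
      obtain ⟨D, C, E⟩ := run_q0 hrun.1 (k + 1)
        (fun l hl => hrun.2 l (Nat.le_of_lt hl)) (by rw [hs]; trivial)
      have hz : z = colAt R (fun n => (w n).1) (k + 1) :=
        (GlState.q0.injEq _ _).mp (hs.symm.trans E)
      have hxk : (w (k + 1)).1 = ⟨z, a⟩ := by rw [hp]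
      have hyk : (w (k + 1)).2 = ⟨z, b⟩ := by rw [hp]
      have hcolx : ∀ l, l ≤ k + 1 →
          ((w l).1).1 = colAt R (fun n => (w n).1) l := by
        intro l hl
        rcases Nat.lt_or_ge l (k + 1) with h | h
        · exact C l h
        · have : l = k + 1 := Nat.le_antisymm hl h
          subst this
          rw [hxk, ← hz]
      have hyx : ∀ l, l ≤ k + 1 → colAt R (fun n => (w n).2) l =
          colAt R (fun n => (w n).1) l := by
        intro l hl
        match l with
        | 0 => rfl
        | Nat.succ l =>
          show some (R.col ((w l).2).1 ((w l).2).2) = some (R.col ((w l).1).1 ((w l).1).2)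
          rw [D l (Nat.lt_of_succ_le hl)]
      have hcoly : ∀ l, l ≤ k + 1 →
          ((w l).2).1 = colAt R (fun n => (w n).2) l := by
        intro l hl
        rcases Nat.lt_or_ge l (k + 1) with h | h
        · rw [← D l h, C l h, ← hyx l (Nat.le_of_lt h)]
        · have : l = k + 1 := Nat.le_antisymm hl h
          subst this
          have h1 : ((w (k + 1)).2).1 = z := by rw [hyk]
          rw [h1, hz]
          exact (hyx (k + 1) le_rfl).symm
      have hx : R.IsWalkUpTo (fun n => (w n).1) (k + 1) := isWalkUpTo_of_colAt hcolx
      have hy : R.IsWalkUpTo (fun n => (w n).2) (k + 1) := isWalkUpTo_of_colAt hcoly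
      have hx' : R.IsWalkUpTo (fun n => (w n).1) k :=
        ⟨hx.1, fun l hl => hx.2 l (Nat.lt_succ_of_lt hl)⟩
      have hy' : R.IsWalkUpTo (fun n => (w n).2) k :=
        ⟨hy.1, fun l hl => hy.2 l (Nat.lt_succ_of_lt hl)⟩
      have hz2 : z = some ((R.fullExp k).col (R.wordEdge (fun n => (w n).1) k hx').1) :=
        hz.trans (congrArg some (R.wordEdge (fun n => (w n).1) k hx').2.symm)
      have hprev : (R.wordEdge (fun n => (w n).2) k hy').1 =
          (R.wordEdge (fun n => (w n).1) k hx').1 :=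
        wordEdge_congr (fun l hl => (D l (Nat.lt_succ_of_le hl)).symm) hy' hx'
      have hxe : (R.wordEdge (fun n => (w n).1) (k + 1) hx).1 =
          ⟨(R.wordEdge (fun n => (w n).1) k hx').1, cast (congrArg R.E hz2) a⟩ :=
        wordEdge_succ_eq hx hxk rfl hz2
      have hye : (R.wordEdge (fun n => (w n).2) (k + 1) hy).1 =
          ⟨(R.wordEdge (fun n => (w n).1) k hx').1, cast (congrArg R.E hz2) b⟩ :=
        wordEdge_succ_eq hy hyk hprev hz2
      refine ⟨hx, hy, ?_, α, β, ?_, ?_⟩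
      · rw [hxe, hye]
        intro hEq
        injection hEq with h1 h2
        exact hab ((cast_inj _).mp h2)
      · rw [ht, hxk, hyk]
      · rw [hxe, hye]
        exact step1 (goodG_fullExp R k) _ hz2 hadj
    · -- Type 2 transition at step k+1.
      have hq1' : (q (k + 1)).inQ1 := by rw [hs]; trivial
      obtain ⟨hx, hy, hne, α', β', hstate, hadj⟩ := IH q
        ⟨hrun.1, fun l hl => hrun.2 l (Nat.le_succ_of_le hl)⟩ hq1'
      obtain ⟨hi, hγ, hj, hδ⟩ := (GlState.q1.injEq _ _ _ _ _ _ _ _).mp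
        (hs.symm.trans hstate)
      subst hi; subst hγ; subst hj; subst hδ
      have hxk : (w (k + 1)).1 = ⟨some (R.col ((w k).1).1 ((w k).1).2), a⟩ := by
        rw [hpw]
      have hyk : (w (k + 1)).2 = ⟨some (R.col ((w k).2).1 ((w k).2).2), b⟩ := by
        rw [hpw]
      have hx1 : R.IsWalkUpTo (fun n => (w n).1) (k + 1) := by
        refine ⟨hx.1, fun l hl => ?_⟩
        rcases Nat.lt_or_ge l k with h | h
        · exact hx.2 l h
        · have h2 : ((w (k + 1)).1).1 = some (R.col ((w k).1).1 ((w k).1).2) := by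
            rw [hxk]
          have h3 : l = k := Nat.le_antisymm (Nat.lt_succ_iff.mp hl) h
          rw [h3]
          exact h2
      have hy1 : R.IsWalkUpTo (fun n => (w n).2) (k + 1) := by
        refine ⟨hy.1, fun l hl => ?_⟩
        rcases Nat.lt_or_ge l k with h | h
        · exact hy.2 l h
        · have h2 : ((w (k + 1)).2).1 = some (R.col ((w k).2).1 ((w k).2).2) := by
            rw [hyk]
          have h3 : l = k := Nat.le_antisymm (Nat.lt_succ_iff.mp hl) h
          rw [h3]
          exact h2
      have hi2 : some (R.col ((w k).1).1 ((w k).1).2) =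
          some ((R.fullExp k).col (R.wordEdge (fun n => (w n).1) k hx).1) :=
        congrArg some (R.wordEdge (fun n => (w n).1) k hx).2.symm
      have hj2 : some (R.col ((w k).2).1 ((w k).2).2) =
          some ((R.fullExp k).col (R.wordEdge (fun n => (w n).2) k hy).1) :=
        congrArg some (R.wordEdge (fun n => (w n).2) k hy).2.symm
      have hxe : (R.wordEdge (fun n => (w n).1) (k + 1) hx1).1 =
          ⟨(R.wordEdge (fun n => (w n).1) k hx).1, cast (congrArg R.E hi2) a⟩ :=
        wordEdge_succ_eq hx1 hxk (wordEdge_proof_irrel _ _ _ _) hi2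
      have hye : (R.wordEdge (fun n => (w n).2) (k + 1) hy1).1 =
          ⟨(R.wordEdge (fun n => (w n).2) k hy).1, cast (congrArg R.E hj2) b⟩ :=
        wordEdge_succ_eq hy1 hyk (wordEdge_proof_irrel _ _ _ _) hj2
      refine ⟨hx1, hy1, ?_, α, β, ?_, ?_⟩
      · rw [hxe, hye]
        intro hEq
        exact hne (congrArg (fun t : (R.fullExp (k + 1)).E => t.1) hEq)
      · rw [ht, hxk, hyk]
      · rw [hxe, hye]
        exact step2 hR (goodG_fullExp R k) hne hi2 hj2 hadj htp hea heb


/-- Type 2 transitions imply adjacency.  If the finite word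
`(x₀,y₀)…(x_k,y_k)` is recognized by `Gl_R` and the transition processing the
last letter `(x_k,y_k)` is a Type 2 transition (i.e. its source state lies in
`Q₁`), then `x₀…x_k` and `y₀…y_k` are adjacent edges of the full expansion
`E_k`, and the last state of the run is `q₁(c(x_k),α;c(y_k),β)` where `(α,β)`
records the adjacency type of `x₀…x_k` and `y₀…y_k` in `E_k` in the sense of
the Type 1 rule. -/
theorem type2_transition_implies_adjacency (R : ERS) (hR : R.Expanding)
    (w : ℕ → R.Alph × R.Alph) (k : ℕ) (q : ℕ → GlState R)
    (hrun : GlRunFin R w k q) (hq1 : (q k).inQ1) :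
    ∃ (hx : R.IsWalkUpTo (fun n => (w n).1) k)
      (hy : R.IsWalkUpTo (fun n => (w n).2) k),
      (R.fullExp k).Adjacent (R.wordEdge (fun n => (w n).1) k hx).1
        (R.wordEdge (fun n => (w n).2) k hy).1 ∧
      ∃ α β : EType,
        q (k + 1) =
          .q1 (R.col ((w k).1).1 ((w k).1).2) α
              (R.col ((w k).2).1 ((w k).2).2) β ∧
        AdjType ((R.fullExp k).ι (R.wordEdge (fun n => (w n).1) k hx).1)
                ((R.fullExp k).τ (R.wordEdge (fun n => (w n).1) k hx).1)
                ((R.fullExp k).ι (R.wordEdge (fun n => (w n).2) k hy).1)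
                ((R.fullExp k).τ (R.wordEdge (fun n => (w n).2) k hy).1) α β := by
  have hq1' : (q (k + 1)).inQ1 := by
    rcases glTrans_inv (hrun.2 k le_rfl) with ⟨z, e, hs, hp, ht⟩ |
      ⟨z, a, b, hab, α, β, hs, hp, ht, hadj⟩ |
      ⟨i, j, γ, δ, a, b, u, w', α, β, hs, hpw, ht, htp, hea, heb⟩
    · rw [hs] at hq1; exact absurd hq1 (by simp [GlState.inQ1])
    · rw [hs] at hq1; exact absurd hq1 (by simp [GlState.inQ1])
    · rw [ht]; trivial
  obtain ⟨hx, hy, hne, α, β, hstate, hadj⟩ := master R hR w k q hrun hq1'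
  exact ⟨hx, hy, adjacent_of_adjType hadj, α, β, hstate, hadj⟩

end ERSPaper
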